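/- Let A be an M×N real centrosymmetric matrix (w_{i,j} = w_{M−i+1,N−j+1}, M, N even) with half-size matrices A¹, A². Then rank(A) = rank(A¹) + rank(A²). -/

import Mathlib

open Matrix LinearMap

section Aux

variable {R : Type*} [Field R]

/-- Range of a product map is the product of ranges. -/
lemma range_prodMap' {M M₂ M₃ M₄ : Type*} [AddCommGroup M] [AddCommGroup M₂]
    [AddCommGroup M₃] [AddCommGroup M₄] [Module R M] [Module R M₂] [Module R M₃] [Module R M₄]
    (f : M →ₗ[R] M₃) (g : M₂ →ₗ[R] M₄) :
    LinearMap.range (f.prodMap g) = (LinearMap.range f).prod (LinearMap.range g) := by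
  ext ⟨y, z⟩
  constructor
  · rintro ⟨⟨a, b⟩, h⟩
    obtain ⟨h1, h2⟩ := Prod.mk.injEq .. ▸ h
    exact ⟨⟨a, h1⟩, ⟨b, h2⟩⟩
  · rintro ⟨⟨a, ha⟩, ⟨b, hb⟩⟩
    exact ⟨(a, b), by simp [ha, hb]⟩

/-- A product submodule is linearly equivalent to the product of the submodules. -/
def prodSubEquiv {M N : Type*} [AddCommGroup M] [AddCommGroup N] [Module R M] [Module R N]
    (p : Submodule R M) (q : Submodule R N) : (p.prod q) ≃ₗ[R] p × q where
  toFun x := (⟨x.1.1, x.2.1⟩, ⟨x.1.2, x.2.2⟩)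
  invFun x := ⟨(x.1.1, x.2.1), ⟨x.1.2, x.2.2⟩⟩
  map_add' _ _ := rfl
  map_smul' _ _ := rfl
  left_inv _ := rfl
  right_inv _ := rfl

/-- Rank of a rectangular matrix is invariant under reindexing by equivs. -/
lemma rank_submatrix_equiv {k l m' n' : Type*} [Fintype l] [Fintype n']
    (A : Matrix k l R) (e₁ : m' ≃ k) (e₂ : n' ≃ l) :
    (A.submatrix e₁ e₂).rank = A.rank := by
  rw [Matrix.rank, Matrix.rank, Matrix.mulVecLin_submatrix, LinearMap.range_comp,
    LinearMap.range_comp,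
    show LinearMap.funLeft R R e₂.symm = (LinearEquiv.funCongrLeft R R e₂.symm : _) from rfl,
    LinearEquiv.range, Submodule.map_top,
    show LinearMap.funLeft R R (e₁ : m' → k) = (LinearEquiv.funCongrLeft R R e₁ : _) from rfl,
    LinearEquiv.finrank_map_eq]

/-- Rank of a block diagonal matrix is the sum of the ranks. -/
lemma rank_fromBlocks_diag {k k' l l' : Type*} [Fintype l] [Fintype l'] [Fintype k] [Fintype k']
    (A : Matrix k l R) (D : Matrix k' l' R) :
    (Matrix.fromBlocks A 0 0 D).rank = A.rank + D.rank := by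
  classical
  have hmap : (Matrix.fromBlocks A 0 0 D).mulVecLin =
      ((LinearEquiv.sumArrowLequivProdArrow k k' R R).symm : _ →ₗ[R] _) ∘ₗ
        (A.mulVecLin.prodMap D.mulVecLin) ∘ₗ
        ((LinearEquiv.sumArrowLequivProdArrow l l' R R) : _ →ₗ[R] _) := by
    apply LinearMap.ext
    intro x
    ext i
    cases i <;>
      simp [Matrix.mulVecLin_apply, Matrix.fromBlocks_mulVec,
        LinearEquiv.sumArrowLequivProdArrow, Equiv.sumArrowEquivProdArrow, Function.comp]
  rw [Matrix.rank, hmap, LinearMap.range_comp, LinearMap.range_comp, LinearEquiv.range,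
    Submodule.map_top, LinearEquiv.finrank_map_eq, range_prodMap',
    (prodSubEquiv _ _).finrank_eq, Module.finrank_prod, Matrix.rank, Matrix.rank]

/-- Left multiplication by a matrix with a left inverse preserves rank. -/
lemma rank_mul_left_inv {k l : Type*} [Fintype k] [Fintype l] [DecidableEq k]
    (L L' : Matrix k k R) (h : L' * L = 1) (X : Matrix k l R) : (L * X).rank = X.rank := by
  refine le_antisymm (Matrix.rank_mul_le_right L X) ?_
  have hX : X = L' * (L * X) := by rw [← Matrix.mul_assoc, h, Matrix.one_mul]
  conv_lhs => rw [hX]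
  exact Matrix.rank_mul_le_right L' (L * X)

/-- Right multiplication by a matrix with a right inverse preserves rank. -/
lemma rank_mul_right_inv {k l : Type*} [Fintype k] [Fintype l] [DecidableEq l]
    (S S' : Matrix l l R) (h : S * S' = 1) (X : Matrix k l R) : (X * S).rank = X.rank := by
  refine le_antisymm (Matrix.rank_mul_le_left X S) ?_
  have hX : X = (X * S) * S' := by rw [Matrix.mul_assoc, h, Matrix.mul_one]
  conv_lhs => rw [hX]
  exact Matrix.rank_mul_le_left (X * S) S'

end Aux

/-- Embedding of `Fin k` into the first half of `Fin (2*k)`. -/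
def emb {k : ℕ} : Fin k → Fin (2 * k) := Fin.castLE (by omega)

/-- The pair `emb`/`rev ∘ emb` assembles to an equivalence `Fin k ⊕ Fin k ≃ Fin (2*k)`. -/
noncomputable def halfEquiv {k : ℕ} : Fin k ⊕ Fin k ≃ Fin (2 * k) :=
  Equiv.ofBijective (Sum.elim emb (fun i => (emb i).rev)) <| by
    rw [Fintype.bijective_iff_injective_and_card]
    constructor
    · rintro (i | i) (j | j) h <;>
        simp only [Sum.elim_inl, Sum.elim_inr] at h <;>
        have := congrArg Fin.val h <;>
        simp only [emb, Fin.val_rev, Fin.coe_castLE] at this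
      · exact congrArg Sum.inl (Fin.ext this)
      · omega
      · omega
      · exact congrArg Sum.inr (Fin.ext (by omega))
    · simp [two_mul]

/-- For a centrosymmetric matrix, `rank A = rank A¹ + rank A²`. -/
theorem stmt12 (m n : ℕ) (hm : 0 < m) (hn : 0 < n)
    (A : Matrix (Fin (2 * m)) (Fin (2 * n)) ℝ)
    (hA : ∀ i j, A i j = A i.rev j.rev)
    (A1 A2 : Matrix (Fin m) (Fin n) ℝ)
    (hA1 : ∀ i j, A1 i j = A (emb i) (emb j) - A (emb i).rev (emb j))
    (hA2 : ∀ i j, A2 i j = A (emb i) (emb j) + A (emb i).rev (emb j)) :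
    A.rank = A1.rank + A2.rank := by
  classical
  set B : Matrix (Fin m) (Fin n) ℝ := fun i j => A (emb i) (emb j) with hB
  set C : Matrix (Fin m) (Fin n) ℝ := fun i j => A (emb i).rev (emb j) with hC
  -- reindex A into block form
  have hAt : A.submatrix (halfEquiv (k := m)) (halfEquiv (k := n)) =
      Matrix.fromBlocks B C C B := by
    ext i j
    rcases i with i | i <;> rcases j with j | j <;>
      simp only [Matrix.submatrix_apply, halfEquiv, Equiv.ofBijective_apply,
        Sum.elim_inl, Sum.elim_inr, Matrix.fromBlocks_apply₁₁, Matrix.fromBlocks_apply₁₂,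
        Matrix.fromBlocks_apply₂₁, Matrix.fromBlocks_apply₂₂, hB, hC, Matrix.fromBlocks, Matrix.of_apply]
    · rw [hA (emb i) ((emb j).rev), Fin.rev_rev]
    · rw [hA ((emb i).rev) ((emb j).rev), Fin.rev_rev, Fin.rev_rev]
  have hrank : A.rank = (Matrix.fromBlocks B C C B).rank := by
    rw [← hAt, rank_submatrix_equiv]
  -- invertible transformation matrices
  set hm1 : Matrix (Fin m) (Fin m) ℝ := (2 : ℝ)⁻¹ • 1 with hhm1
  set hn1 : Matrix (Fin n) (Fin n) ℝ := (2 : ℝ)⁻¹ • 1 with hhn1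
  have hm1add : hm1 + hm1 = 1 := by rw [hhm1, ← add_smul]; norm_num
  have hn1add : hn1 + hn1 = 1 := by rw [hhn1, ← add_smul]; norm_num
  set L : Matrix (Fin m ⊕ Fin m) (Fin m ⊕ Fin m) ℝ := Matrix.fromBlocks 1 (-1) 1 1 with hL
  set L' : Matrix (Fin m ⊕ Fin m) (Fin m ⊕ Fin m) ℝ :=
    Matrix.fromBlocks hm1 hm1 (-hm1) hm1 with hL'
  set S : Matrix (Fin n ⊕ Fin n) (Fin n ⊕ Fin n) ℝ := Matrix.fromBlocks 1 1 (-1) 1 with hS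
  set S' : Matrix (Fin n ⊕ Fin n) (Fin n ⊕ Fin n) ℝ :=
    Matrix.fromBlocks hn1 (-hn1) hn1 hn1 with hS'
  have hLinv : L' * L = 1 := by
    rw [hL, hL', Matrix.fromBlocks_multiply, ← Matrix.fromBlocks_one, Matrix.fromBlocks_inj]
    refine ⟨?_, ?_, ?_, ?_⟩ <;>
      simp [Matrix.mul_one, Matrix.mul_neg, Matrix.neg_mul, hm1add]
  have hSinv : S * S' = 1 := by
    rw [hS, hS', Matrix.fromBlocks_multiply, ← Matrix.fromBlocks_one, Matrix.fromBlocks_inj]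
    refine ⟨?_, ?_, ?_, ?_⟩ <;>
      simp [Matrix.one_mul, Matrix.mul_neg, Matrix.neg_mul, hn1add]
  -- the key computation
  have hprod : L * Matrix.fromBlocks B C C B * S =
      Matrix.fromBlocks ((2:ℝ) • A1) 0 0 ((2:ℝ) • A2) := by
    have h1 : A1 = B - C := by ext i j; simp [hA1, hB, hC, Matrix.sub_apply]; rfl
    have h2 : A2 = B + C := by ext i j; simp [hA2, hB, hC, Matrix.add_apply]; rfl
    rw [hL, hS, Matrix.fromBlocks_multiply, Matrix.fromBlocks_multiply, h1, h2,
      Matrix.fromBlocks_inj]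
    refine ⟨?_, ?_, ?_, ?_⟩ <;> ext i j <;>
      simp [Matrix.mul_apply, Matrix.add_apply, Matrix.sub_apply, Matrix.smul_apply,
        Matrix.one_apply, Matrix.neg_apply, Finset.sum_add_distrib] <;> ring
  have hrk2 : (Matrix.fromBlocks B C C B).rank =
      (Matrix.fromBlocks ((2:ℝ) • A1) 0 0 ((2:ℝ) • A2)).rank := by
    rw [← hprod, rank_mul_right_inv S S' hSinv, rank_mul_left_inv L L' hLinv]
  have hsm1 : ((2:ℝ) • A1).rank = A1.rank := by
    have h2A : (2:ℝ) • A1 = ((2:ℝ) • (1 : Matrix (Fin m) (Fin m) ℝ)) * A1 := by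
      rw [Matrix.smul_mul, Matrix.one_mul]
    rw [h2A, rank_mul_left_inv _ ((2:ℝ)⁻¹ • 1) (by
      rw [Matrix.smul_mul, Matrix.mul_smul, Matrix.one_mul, smul_smul,
        show (2:ℝ)⁻¹*2 = 1 by norm_num, one_smul]) A1]
  have hsm2 : ((2:ℝ) • A2).rank = A2.rank := by
    have h2A : (2:ℝ) • A2 = ((2:ℝ) • (1 : Matrix (Fin m) (Fin m) ℝ)) * A2 := by
      rw [Matrix.smul_mul, Matrix.one_mul]
    rw [h2A, rank_mul_left_inv _ ((2:ℝ)⁻¹ • 1) (by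
      rw [Matrix.smul_mul, Matrix.mul_smul, Matrix.one_mul, smul_smul,
        show (2:ℝ)⁻¹*2 = 1 by norm_num, one_smul]) A2]
  rw [hrank, hrk2, rank_fromBlocks_diag, hsm1, hsm2]
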